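/- Additivity of KD mana: M(ρ⊗σ) = M(ρ) + M(σ) for density matrices ρ and σ on (C^2)^{⊗n₁} and (C^2)^{⊗n₂}, where M(ρ) = log Σ_{g,χ}|Q_{g,χ}(ρ)|. -/

import Mathlib

open scoped BigOperators
open Matrix Kronecker
open scoped ComplexOrder

noncomputable section

/-- The group `G = (ℤ/2ℤ)^n` indexing the computational basis of `(ℂ²)^{⊗n}`. -/
abbrev G (n : ℕ) : Type := Fin n → ZMod 2

/-- Mod-2 dot product. -/
def dot {n : ℕ} (u v : G n) : ZMod 2 := ∑ j, u j * v j

/-- `(-1)^x` for `x : ZMod 2`. -/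
def sgn (x : ZMod 2) : ℂ := if x = 0 then 1 else -1

/-- Normalization constant `2^{-n/2}`. -/
def nrm (n : ℕ) : ℂ := ((Real.sqrt 2 ^ n : ℝ) : ℂ)⁻¹

/-- Amplitude `⟨a|χ⟩ = (-1)^{χ·a} 2^{-n/2}` of the Fourier basis state `|χ⟩`. -/
def chi {n : ℕ} (χ a : G n) : ℂ := sgn (dot χ a) * nrm n

/-- KD phase-space point operator `B_{g,χ} = |χ⟩⟨χ|g⟩⟨g|`. -/
def B {n : ℕ} (g χ : G n) : Matrix (G n) (G n) ℂ :=
  Matrix.of fun a b => chi χ a * (starRingEnd ℂ) (chi χ g) * (if b = g then 1 else 0)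

/-- Real Pauli string `P_{u,v} = ∏_j Z_j^{v_j} X_j^{u_j}`:
it maps `|b⟩` to `(-1)^{v·(b+u)} |b+u⟩`. -/
def P {n : ℕ} (u v : G n) : Matrix (G n) (G n) ℂ :=
  Matrix.of fun a b => if a = b + u then sgn (dot v a) else 0

/-- The `(ℤ/2ℤ)^n` Kirkwood–Dirac distribution `Q_{g,χ}(ρ) = Tr(B_{g,χ} ρ)`. -/
def Q {n : ℕ} (ρ : Matrix (G n) (G n) ℂ) (g χ : G n) : ℂ := (B g χ * ρ).trace


lemma sgn_zero : sgn 0 = 1 := rfl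

lemma sgn_add (x y : ZMod 2) : sgn (x + y) = sgn x * sgn y := by
  have h : ∀ a b : ZMod 2, a + b = 0 ↔ (a = 0 ↔ b = 0) := by decide
  by_cases hx : x = 0 <;> by_cases hy : y = 0 <;> simp [sgn, h, hx, hy]

lemma star_sgn (x : ZMod 2) : (starRingEnd ℂ) (sgn x) = sgn x := by
  unfold sgn; split_ifs <;> simp

lemma sgn_sum {ι : Type*} (s : Finset ι) (f : ι → ZMod 2) :
    sgn (∑ j ∈ s, f j) = ∏ j ∈ s, sgn (f j) := by
  classical
  induction s using Finset.cons_induction with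
  | empty => simp [sgn_zero]
  | cons a s ha ih => rw [Finset.sum_cons, Finset.prod_cons, sgn_add, ih]

lemma sum_sgn_one (w : ZMod 2) : ∑ c : ZMod 2, sgn (c * w) = 1 + sgn w := by
  have : (Finset.univ : Finset (ZMod 2)) = {0, 1} := by decide
  rw [this, Finset.sum_pair (by decide)]
  simp [sgn_zero]

lemma sum_sgn_dot {n : ℕ} (w : G n) :
    ∑ χ : G n, sgn (dot χ w) = if w = 0 then (2 : ℂ) ^ n else 0 := by
  classical
  simp only [dot, sgn_sum]
  rw [← Fintype.prod_sum (f := fun (j : Fin n) (c : ZMod 2) => sgn (c * w j))]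
  by_cases hw : w = 0
  · subst hw
    simp [sum_sgn_one, sgn_zero]
  · have : ∃ j, w j ≠ 0 := by
      by_contra h; push_neg at h; exact hw (funext h)
    obtain ⟨j, hj⟩ := this
    rw [if_neg hw]
    apply Finset.prod_eq_zero (Finset.mem_univ j)
    rw [sum_sgn_one]
    have : w j = 1 := (by decide : ∀ x : ZMod 2, x ≠ 0 → x = 1) _ hj
    rw [this]; simp [sgn]

lemma dot_add_right {n : ℕ} (u v w : G n) : dot u (v + w) = dot u v + dot u w := by
  simp [dot, mul_add, Finset.sum_add_distrib]

lemma neg_eq_self_G {n : ℕ} (g : G n) : -g = g := by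
  funext j; exact (by decide : ∀ x : ZMod 2, -x = x) (g j)

lemma two_pow_nrm (n : ℕ) : (2 : ℂ) ^ n * (nrm n * (starRingEnd ℂ) (nrm n)) = 1 := by
  have h0 : (Real.sqrt 2 : ℝ) ^ n * Real.sqrt 2 ^ n = 2 ^ n := by
    rw [← mul_pow, Real.mul_self_sqrt (by norm_num)]
  have h : ((Real.sqrt 2 ^ n : ℝ) : ℂ) * ((Real.sqrt 2 ^ n : ℝ) : ℂ) = (2 : ℂ) ^ n := by
    rw [← Complex.ofReal_mul, h0]; push_cast; ring
  have hconj : (starRingEnd ℂ) (nrm n) = nrm n := by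
    simp [nrm, ← Complex.ofReal_inv]
  rw [hconj, nrm, ← mul_inv, h]
  have : (2 : ℂ) ^ n ≠ 0 := by positivity
  field_simp

lemma sum_chi {n : ℕ} (a g : G n) :
    ∑ χ : G n, chi χ a * (starRingEnd ℂ) (chi χ g) = if a = g then 1 else 0 := by
  have hre : ∀ χ : G n, chi χ a * (starRingEnd ℂ) (chi χ g)
      = sgn (dot χ (a + g)) * (nrm n * (starRingEnd ℂ) (nrm n)) := by
    intro χ
    simp only [chi, _root_.map_mul, star_sgn]
    rw [dot_add_right, sgn_add]
    ring
  simp only [hre, ← Finset.sum_mul, sum_sgn_dot]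
  have hag : a + g = 0 ↔ a = g := by
    constructor
    · intro h
      have := congrArg (· + g) h
      simpa [add_assoc, neg_eq_self_G g ▸ (add_neg_cancel g : g + -g = 0)] using
        by
          have : a + g + g = 0 + g := by rw [h]
          simpa [add_assoc, show g + g = (0 : G n) by funext j; exact (by decide : ∀ x : ZMod 2, x + x = 0) (g j)] using this
    · rintro rfl
      funext j; exact (by decide : ∀ x : ZMod 2, x + x = 0) (a j)
  by_cases h : a = g
  · rw [if_pos ((hag).mpr h), if_pos h, two_pow_nrm]
  · rw [if_neg (fun hh => h (hag.mp hh)), if_neg h, zero_mul]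

lemma sum_Q {n : ℕ} (ρ : Matrix (G n) (G n) ℂ) :
    ∑ g : G n, ∑ χ : G n, Q ρ g χ = ρ.trace := by
  have hQ : ∀ g χ : G n, Q ρ g χ = ∑ a, chi χ a * (starRingEnd ℂ) (chi χ g) * ρ g a := by
    intro g χ
    simp [Q, Matrix.trace, Matrix.mul_apply, B, ite_mul, Matrix.diag]
  calc ∑ g : G n, ∑ χ : G n, Q ρ g χ
      = ∑ g : G n, ∑ a, (∑ χ : G n, chi χ a * (starRingEnd ℂ) (chi χ g)) * ρ g a := by
        simp only [hQ]
        rw [Finset.sum_congr rfl (fun g _ => Finset.sum_comm)]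
        simp [Finset.sum_mul]
    _ = ∑ g : G n, ρ g g := by simp [sum_chi]
    _ = ρ.trace := rfl


/-- KD mana `M(rho) = log sum_{g,chi} |Q_{g,chi}(rho)|`. -/
def mana {n : ℕ} (ρ : Matrix (G n) (G n) ℂ) : ℝ :=
  Real.log (∑ g : G n, ∑ χ : G n, ‖Q ρ g χ‖)

/-- additivity of the KD mana under tensor products. On the composite
system the KD phase-space point operators are Kronecker products. -/
theorem mana_additive {n₁ n₂ : ℕ}
    (ρ : Matrix (G n₁) (G n₁) ℂ) (σ : Matrix (G n₂) (G n₂) ℂ)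
    (hρ : ρ.PosSemidef) (hρτ : ρ.trace = 1)
    (hσ : σ.PosSemidef) (hστ : σ.trace = 1) :
    Real.log (∑ g : G n₁, ∑ g' : G n₂, ∑ χ : G n₁, ∑ χ' : G n₂,
        ‖((B g χ ⊗ₖ B g' χ') * (ρ ⊗ₖ σ)).trace‖) =
      mana ρ + mana σ := by
  have hfact : ∀ (g χ : G n₁) (g' χ' : G n₂),
      ((B g χ ⊗ₖ B g' χ') * (ρ ⊗ₖ σ)).trace = Q ρ g χ * Q σ g' χ' := by
    intro g χ g' χ'
    rw [← Matrix.mul_kronecker_mul, Matrix.trace_kronecker]; rfl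
  have hsum_pos : ∀ {n : ℕ} (τ : Matrix (G n) (G n) ℂ), τ.trace = 1 →
      (0 : ℝ) < ∑ g : G n, ∑ χ : G n, ‖Q τ g χ‖ := by
    intro n τ hτ
    have h1 : (1 : ℝ) ≤ ∑ g : G n, ∑ χ : G n, ‖Q τ g χ‖ := by
      calc (1 : ℝ) = ‖∑ g : G n, ∑ χ : G n, Q τ g χ‖ := by
            rw [sum_Q, hτ]; simp
        _ ≤ ∑ g : G n, ‖∑ χ : G n, Q τ g χ‖ := norm_sum_le _ _
        _ ≤ ∑ g : G n, ∑ χ : G n, ‖Q τ g χ‖ :=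
            Finset.sum_le_sum fun g _ => norm_sum_le _ _
    linarith
  have hS : (∑ g : G n₁, ∑ g' : G n₂, ∑ χ : G n₁, ∑ χ' : G n₂,
        ‖((B g χ ⊗ₖ B g' χ') * (ρ ⊗ₖ σ)).trace‖)
      = (∑ g : G n₁, ∑ χ : G n₁, ‖Q ρ g χ‖) *
        (∑ g' : G n₂, ∑ χ' : G n₂, ‖Q σ g' χ'‖) := by
    simp only [hfact, norm_mul]
    simp only [← Finset.sum_mul, ← Finset.mul_sum]
  rw [hS, Real.log_mul (ne_of_gt (hsum_pos ρ hρτ)) (ne_of_gt (hsum_pos σ hστ))]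
  rfl
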